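/- For every integer d ≥ 1 and every ε with 0 < ε < π²/2, the oscillation of the cost function c_ε over 𝕋^d × 𝕋^d satisfies sup_{x,y∈𝕋^d} c_ε(x,y) − inf_{x,y∈𝕋^d} c_ε(x,y) < 4π²·d; equivalently, ε·(sup_{x∈𝕋^d} log K_ε(x) − inf_{x∈𝕋^d} log K_ε(x)) < 4π²·d. -/

import Mathlib

open MeasureTheory Real

noncomputable section

instance : Fact ((0:ℝ) < 2 * Real.pi) := ⟨by positivity⟩

/-- The flat torus `𝕋^d = ℝ^d / (2πℤ)^d`, as a product of additive circles. -/
abbrev Torus (d : ℕ) : Type := Fin d → AddCircle (2 * Real.pi)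

namespace Torus

variable {d : ℕ}

/-- The canonical lift of a torus point to `ℝ^d` (componentwise representative in `[0, 2π)`). -/
noncomputable def lift (x : Torus d) : Fin d → ℝ :=
  fun i => (AddCircle.equivIco (2 * Real.pi) 0 (x i) : ℝ)

/-- The flat torus distance `dist(x,y) = min_{k ∈ ℤ^d} ‖x - y - 2πk‖` (Euclidean norm). -/
noncomputable def tdist (x y : Torus d) : ℝ :=
  ⨅ k : Fin d → ℤ, Real.sqrt (∑ i, (lift x i - lift y i - 2 * Real.pi * (k i)) ^ 2)

/-- The Gaussian (heat) kernel `K_ε` on the torus. -/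
noncomputable def gker (ε : ℝ) (x : Torus d) : ℝ :=
  (2 * Real.pi * ε) ^ (-(d : ℝ) / 2) *
    ∑' k : Fin d → ℤ,
      Real.exp (-(∑ i, (lift x i - 2 * Real.pi * (k i)) ^ 2) / (2 * ε))

/-- The cost function `c_ε(x,y) = -ε log K_ε(x - y)`. -/
noncomputable def cost (ε : ℝ) (x y : Torus d) : ℝ := -(ε * Real.log (gker ε (x - y)))

/-- The operator `𝒯_μ^ε[φ](y) = -ε log ∫ exp((φ(x) - c_ε(x,y))/ε) dμ(x)`. -/
noncomputable def Tmap (ε : ℝ) (μ : Measure (Torus d)) (φ : Torus d → ℝ) (y : Torus d) : ℝ :=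
  -(ε * Real.log (∫ x, Real.exp ((φ x - cost ε x y) / ε) ∂μ))

/-- The Schrödinger functional `I_{μ,ν}^ε[φ] = ∫ φ dμ + ∫ 𝒯_μ^ε[φ] dν`. -/
noncomputable def SchFun (ε : ℝ) (μ ν : Measure (Torus d)) (φ : Torus d → ℝ) : ℝ :=
  (∫ x, φ x ∂μ) + ∫ y, Tmap ε μ φ y ∂ν

/-- The Schrödinger functional `Ī_{μ,ν}^ε[ψ] = ∫ 𝒯_ν^ε[ψ] dμ + ∫ ψ dν`. -/
noncomputable def SchFunBar (ε : ℝ) (μ ν : Measure (Torus d)) (ψ : Torus d → ℝ) : ℝ :=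
  (∫ x, Tmap ε ν ψ x ∂μ) + ∫ y, ψ y ∂ν

/-- `(φ, ψ)` is a pair of Schrödinger potentials for `(μ, ν, ε)`. -/
structure IsSchrodingerPotentials (ε : ℝ) (μ ν : Measure (Torus d))
    (φ ψ : Torus d → ℝ) : Prop where
  cont_phi : Continuous φ
  cont_psi : Continuous ψ
  eq_psi : ψ = Tmap ε μ φ
  eq_phi : φ = Tmap ε ν ψ
  max_phi : ∀ g : Torus d → ℝ, Continuous g → SchFun ε μ ν g ≤ SchFun ε μ ν φ
  max_psi : ∀ g : Torus d → ℝ, Continuous g → SchFunBar ε μ ν g ≤ SchFunBar ε μ ν ψ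

/-- Variance of `f` under the probability measure `m`. -/
noncomputable def Var (m : Measure (Torus d)) (f : Torus d → ℝ) : ℝ :=
  ∫ x, (f x - ∫ y, f y ∂m) ^ 2 ∂m

/-- Oscillation `osc f = sup f - inf f`. -/
noncomputable def osc (f : Torus d → ℝ) : ℝ := (⨆ x, f x) - ⨅ x, f x

/-- `μ` has density `f` with respect to the Lebesgue (Haar) measure on the torus. -/
def HasDensity (μ : Measure (Torus d)) (f : Torus d → ℝ) : Prop :=
  μ = (volume : Measure (Torus d)).withDensity (fun x => ENNReal.ofReal (f x))

end Torus

open Torus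
namespace Torus

variable {d : ℕ}

/-- The probability measure `π_y[φ]`, with density
`exp((φ(x) - c_ε(x,y))/ε) / ∫ exp((φ(x') - c_ε(x',y))/ε) dμ(x')` with respect to `μ`. -/
noncomputable def piY (ε : ℝ) (μ : Measure (Torus d)) (φ : Torus d → ℝ) (y : Torus d) :
    Measure (Torus d) :=
  μ.withDensity fun x => ENNReal.ofReal
    (Real.exp ((φ x - cost ε x y) / ε) / ∫ x', Real.exp ((φ x' - cost ε x' y) / ε) ∂μ)

/-- The probability measure `π^ν[φ] : A ↦ ∫ π_y[φ](A) dν(y)`. -/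
noncomputable def piNu (ε : ℝ) (μ ν : Measure (Torus d)) (φ : Torus d → ℝ) :
    Measure (Torus d) :=
  ν.bind fun y => piY ε μ φ y

/-- The probability measure `γ_Q` on the torus, with density proportional to
`1_{B(x₀,r)}(x) exp(-dist(x₀,x)²/α)`. -/
noncomputable def gammaQ (x₀ : Torus d) (r α : ℝ) : Measure (Torus d) :=
  ((volume.withDensity fun x => ENNReal.ofReal
      (if tdist x₀ x < r then Real.exp (-(tdist x₀ x) ^ 2 / α) else 0)) Set.univ)⁻¹ •
    (volume.withDensity fun x => ENNReal.ofReal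
      (if tdist x₀ x < r then Real.exp (-(tdist x₀ x) ^ 2 / α) else 0))

/-- Normalized restriction `ν_Q(A) = ν(A ∩ Q) / ν(Q)`. -/
noncomputable def normRestrict (ν : Measure (Torus d)) (Q : Set (Torus d)) :
    Measure (Torus d) :=
  (ν Q)⁻¹ • ν.restrict Q

open Classical in
/-- Kullback–Leibler divergence: `KL(P‖Q) = ∫ log(dP/dQ) dP` if `P ≪ Q`, `+∞` otherwise. -/
noncomputable def KLdiv {α : Type*} [MeasurableSpace α] (P Q : Measure α) : EReal :=
  if P ≪ Q then ((∫ x, Real.log ((P.rnDeriv Q x).toReal) ∂P : ℝ) : EReal) else ⊤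

/-- Convolution with the Gaussian kernel: `(K_ε ∗ f)(x) = ∫ K_ε(x - y) f(y) dy`. -/
noncomputable def gconv (ε : ℝ) (f : Torus d → ℝ) (x : Torus d) : ℝ :=
  ∫ y, gker ε (x - y) * f y

/-- The measure `π_{μ,ε}` on `𝕋^d × 𝕋^d` given by `dπ_{μ,ε}(x,y) = K_ε(y - x) dy dμ(x)`. -/
noncomputable def piProd (ε : ℝ) (μ : Measure (Torus d)) : Measure (Torus d × Torus d) :=
  (μ.prod (volume : Measure (Torus d))).withDensity fun p =>
    ENNReal.ofReal (gker ε (p.2 - p.1))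

end Torus

section Statement14Aux

namespace Torus

variable {d : ℕ}

private lemma two_le_exp_four : (2 : ℝ) ≤ Real.exp 4 := by
  have := Real.add_one_le_exp (4 : ℝ); linarith

private lemma term_le_H {ε : ℝ} (hε : 0 < ε) (hεπ : ε < Real.pi ^ 2 / 2)
    {v : ℝ} (hv0 : 0 ≤ v) (hv1 : v < 2 * Real.pi) (m : ℤ) :
    Real.exp (-(v - 2 * Real.pi * m) ^ 2 / (2 * ε)) ≤ 2 * (1 / 2 : ℝ) ^ m.natAbs := by
  have hπ := Real.pi_pos
  set a : ℕ := m.natAbs with ha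
  set n : ℕ := a - 1 with hn
  have habs : |(2 * Real.pi * m : ℝ)| = 2 * Real.pi * a := by
    rw [abs_mul, abs_of_pos (by positivity : (0:ℝ) < 2 * Real.pi)]
    congr 1
    rw [ha, Nat.cast_natAbs, Int.cast_abs]
  have h1 : 2 * Real.pi * n ≤ |v - 2 * Real.pi * m| := by
    rcases Nat.eq_zero_or_pos a with h | h
    · have hn0 : n = 0 := by omega
      rw [hn0]
      simpa using abs_nonneg (v - 2 * Real.pi * m)
    · have hnc : (n : ℝ) = (a : ℝ) - 1 := by
        have h' : n + 1 = a := by omega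
        have := congrArg (fun t : ℕ => (t : ℝ)) h'
        push_cast at this
        linarith
      have h2 : |(2 * Real.pi * m : ℝ)| - |v| ≤ |v - 2 * Real.pi * m| := by
        rw [abs_sub_comm]
        exact abs_sub_abs_le_abs_sub _ _
      rw [habs, abs_of_nonneg hv0] at h2
      rw [hnc]
      nlinarith
  have hsq : 4 * Real.pi ^ 2 * (n : ℝ) ^ 2 ≤ (v - 2 * Real.pi * m) ^ 2 := by
    have := pow_le_pow_left₀ (by positivity) h1 2
    rw [sq_abs] at this
    nlinarith
  have hnn : (n : ℝ) ≤ (n : ℝ) ^ 2 := by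
    rcases Nat.eq_zero_or_pos n with h | h
    · simp [h]
    · have : (1 : ℝ) ≤ (n : ℝ) := by exact_mod_cast h
      nlinarith
  have hcast : (0 : ℝ) ≤ (n : ℝ) := Nat.cast_nonneg n
  have hexp1 : -(v - 2 * Real.pi * m) ^ 2 / (2 * ε) ≤ (n : ℝ) * (-4) := by
    rw [div_le_iff₀ (by positivity : (0:ℝ) < 2 * ε)]
    have e1 : 8 * ε * (n : ℝ) ≤ 4 * Real.pi ^ 2 * (n : ℝ) :=
      mul_le_mul_of_nonneg_right (by nlinarith) hcast
    have e2 : 4 * Real.pi ^ 2 * (n : ℝ) ≤ 4 * Real.pi ^ 2 * (n : ℝ) ^ 2 :=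
      mul_le_mul_of_nonneg_left hnn (by positivity)
    nlinarith
  calc Real.exp (-(v - 2 * Real.pi * m) ^ 2 / (2 * ε))
      ≤ Real.exp ((n : ℝ) * (-4)) := Real.exp_le_exp.mpr hexp1
    _ = Real.exp (-4) ^ n := by rw [← Real.exp_nat_mul]
    _ ≤ (1 / 2 : ℝ) ^ n := by
        apply pow_le_pow_left₀ (Real.exp_nonneg _)
        rw [Real.exp_neg]
        have : (2 : ℝ)⁻¹ = 1 / 2 := by norm_num
        rw [← this]
        exact inv_anti₀ (by norm_num) two_le_exp_four
    _ ≤ 2 * (1 / 2 : ℝ) ^ a := by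
        rcases Nat.eq_zero_or_pos a with h | h
        · have hn0 : n = 0 := by omega
          rw [h, hn0]; norm_num
        · have h' : a = n + 1 := by omega
          rw [h', pow_succ]; ring_nf; nlinarith [pow_nonneg (by norm_num : (0:ℝ) ≤ 1/2) n]

private lemma H_hasSum : HasSum (fun m : ℤ => 2 * (1 / 2 : ℝ) ^ m.natAbs) 6 := by
  have hgeo : HasSum (fun n : ℕ => (1 / 2 : ℝ) ^ n) 2 := by
    have h := hasSum_geometric_of_lt_one (by norm_num : (0:ℝ) ≤ 1 / 2) (by norm_num)
    have h2 : ((1:ℝ) - 1 / 2)⁻¹ = 2 := by norm_num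
    rwa [h2] at h
  have h1 : HasSum (fun n : ℕ => 2 * (1 / 2 : ℝ) ^ ((n : ℤ)).natAbs) 4 := by
    have h := hgeo.mul_left 2
    have heq : (fun n : ℕ => 2 * (1 / 2 : ℝ) ^ ((n : ℤ)).natAbs)
        = fun n : ℕ => 2 * (1 / 2 : ℝ) ^ n := by
      funext n
      rw [Int.natAbs_natCast]
    rw [heq]
    rw [show (4:ℝ) = 2 * 2 by norm_num]; exact h
  have h2 : HasSum (fun n : ℕ => 2 * (1 / 2 : ℝ) ^ ((-((n : ℤ) + 1))).natAbs) 2 := by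
    have heq : (fun n : ℕ => 2 * (1 / 2 : ℝ) ^ ((-((n : ℤ) + 1))).natAbs)
        = fun n : ℕ => (1 / 2 : ℝ) ^ n := by
      funext n
      have : ((-((n : ℤ) + 1))).natAbs = n + 1 := by
        omega
      rw [this, pow_succ]; ring
    rw [heq]; exact hgeo
  have h3 : HasSum (fun m : ℤ => 2 * (1 / 2 : ℝ) ^ m.natAbs) (4 + 2) :=
    HasSum.of_nat_of_neg_add_one (f := fun m : ℤ => 2 * (1 / 2 : ℝ) ^ m.natAbs) h1 h2
  norm_num at h3
  exact h3

private lemma hasSum_pi_prod {h : ℤ → ℝ} (h0 : ∀ m, 0 ≤ h m) {S : ℝ} (hs : HasSum h S)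
    (d : ℕ) : HasSum (fun k : Fin d → ℤ => ∏ i, h (k i)) (S ^ d) := by
  induction d with
  | zero =>
      have heq : (fun k : Fin 0 → ℤ => ∏ i, h (k i)) = fun _ => (1 : ℝ) := by
        funext k; simp
      rw [heq, pow_zero]
      have := hasSum_single (f := fun _ : Fin 0 → ℤ => (1 : ℝ))
        (default : Fin 0 → ℤ) (fun j hj => absurd (Subsingleton.elim j default) hj)
      exact this
  | succ d ih =>
      have hsum2 : Summable (fun p : ℤ × (Fin d → ℤ) => h p.1 * ∏ i, h (p.2 i)) :=
        Summable.mul_of_nonneg (f := h) (g := fun k : Fin d → ℤ => ∏ i, h (k i))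
          hs.summable ih.summable (fun m => h0 m)
          (fun k => Finset.prod_nonneg fun i _ => h0 _)
      have hG : HasSum (fun p : ℤ × (Fin d → ℤ) => h p.1 * ∏ i, h (p.2 i)) (S * S ^ d) :=
        HasSum.mul (f := h) (g := fun k : Fin d → ℤ => ∏ i, h (k i)) hs ih hsum2
      have he : HasSum ((fun k : Fin (d + 1) → ℤ => ∏ i, h (k i)) ∘
          (Fin.consEquiv fun _ => ℤ)) (S * S ^ d) := by
        have heq : ((fun k : Fin (d + 1) → ℤ => ∏ i, h (k i)) ∘
            (Fin.consEquiv fun _ => ℤ))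
            = fun p : ℤ × (Fin d → ℤ) => h p.1 * ∏ i, h (p.2 i) := by
          funext p
          simp [Fin.consEquiv, Fin.prod_univ_succ]
        rw [heq]; exact hG
      have := (Equiv.hasSum_iff (Fin.consEquiv fun _ => ℤ)).mp he
      rw [pow_succ]
      rw [mul_comm (S ^ d) S]
      exact this

private lemma lift_mem {x : Torus d} (i : Fin d) :
    0 ≤ lift x i ∧ lift x i < 2 * Real.pi := by
  have h := (AddCircle.equivIco (2 * Real.pi) 0 (x i)).2
  simp only [Set.mem_Ico, zero_add] at h
  exact h

private lemma tsum_gauss_bounds {ε : ℝ} (hε : 0 < ε) (hεπ : ε < Real.pi ^ 2 / 2)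
    (x : Torus d) :
    Real.exp (-((d : ℝ) * Real.pi ^ 2) / (2 * ε)) ≤
      (∑' k : Fin d → ℤ,
        Real.exp (-(∑ i, (lift x i - 2 * Real.pi * (k i)) ^ 2) / (2 * ε))) ∧
      (∑' k : Fin d → ℤ,
        Real.exp (-(∑ i, (lift x i - 2 * Real.pi * (k i)) ^ 2) / (2 * ε))) ≤ 6 ^ d := by
  have hπ := Real.pi_pos
  have hFprod : ∀ k : Fin d → ℤ,
      Real.exp (-(∑ i, (lift x i - 2 * Real.pi * (k i)) ^ 2) / (2 * ε))
        = ∏ i, Real.exp (-(lift x i - 2 * Real.pi * (k i)) ^ 2 / (2 * ε)) := by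
    intro k
    rw [show -(∑ i, (lift x i - 2 * Real.pi * (k i)) ^ 2) / (2 * ε)
        = ∑ i, -(lift x i - 2 * Real.pi * (k i)) ^ 2 / (2 * ε) by
      rw [← Finset.sum_neg_distrib, Finset.sum_div]]
    exact Real.exp_sum _ _
  have hH := H_hasSum
  have h0 : ∀ m : ℤ, (0 : ℝ) ≤ 2 * (1 / 2 : ℝ) ^ m.natAbs := fun m => by positivity
  have hHd := hasSum_pi_prod h0 hH d
  have hFle : ∀ k : Fin d → ℤ,
      Real.exp (-(∑ i, (lift x i - 2 * Real.pi * (k i)) ^ 2) / (2 * ε))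
        ≤ ∏ i, 2 * (1 / 2 : ℝ) ^ ((k i).natAbs) := by
    intro k
    rw [hFprod k]
    apply Finset.prod_le_prod (fun i _ => Real.exp_nonneg _)
    intro i _
    exact term_le_H hε hεπ (lift_mem i).1 (lift_mem i).2 (k i)
  have hFs : Summable (fun k : Fin d → ℤ =>
      Real.exp (-(∑ i, (lift x i - 2 * Real.pi * (k i)) ^ 2) / (2 * ε))) :=
    Summable.of_nonneg_of_le (fun k => Real.exp_nonneg _) hFle hHd.summable
  constructor
  · set k₀ : Fin d → ℤ := fun i => if lift x i ≤ Real.pi then 0 else 1 with hk₀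
    have hsum : (∑ i, (lift x i - 2 * Real.pi * ((k₀ i : ℤ) : ℝ)) ^ 2)
        ≤ (d : ℝ) * Real.pi ^ 2 := by
      have hterm : ∀ i : Fin d,
          (lift x i - 2 * Real.pi * ((k₀ i : ℤ) : ℝ)) ^ 2 ≤ Real.pi ^ 2 := by
        intro i
        have h0' := (lift_mem (x := x) i).1
        have h1' := (lift_mem (x := x) i).2
        by_cases hcase : lift x i ≤ Real.pi
        · have hk : k₀ i = 0 := by rw [hk₀]; simp [hcase]
          rw [hk]
          push_cast
          rw [mul_zero, sub_zero]
          exact sq_le_sq' (by linarith) hcase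
        · have hk : k₀ i = 1 := by rw [hk₀]; simp [hcase]
          rw [hk]
          push_cast
          rw [mul_one]
          push_neg at hcase
          exact sq_le_sq' (by linarith) (by linarith)
      calc (∑ i, (lift x i - 2 * Real.pi * ((k₀ i : ℤ) : ℝ)) ^ 2)
          ≤ ∑ _i : Fin d, Real.pi ^ 2 := Finset.sum_le_sum fun i _ => hterm i
        _ = (d : ℝ) * Real.pi ^ 2 := by
            rw [Finset.sum_const, Finset.card_univ, Fintype.card_fin, nsmul_eq_mul]
    have hterm2 : Real.exp (-((d : ℝ) * Real.pi ^ 2) / (2 * ε)) ≤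
        Real.exp (-(∑ i, (lift x i - 2 * Real.pi * ((k₀ i : ℤ) : ℝ)) ^ 2) / (2 * ε)) := by
      apply Real.exp_le_exp.mpr
      rw [neg_div, neg_div, neg_le_neg_iff]
      exact (div_le_div_iff_of_pos_right (by positivity)).mpr hsum
    exact hterm2.trans (Summable.le_tsum hFs k₀ fun j _ => Real.exp_nonneg _)
  · exact (Summable.tsum_le_tsum hFle hFs hHd.summable).trans_eq hHd.tsum_eq

private lemma log_gker_bounds {ε : ℝ} (hε : 0 < ε) (hεπ : ε < Real.pi ^ 2 / 2)
    (x : Torus d) :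
    Real.log ((2 * Real.pi * ε) ^ (-(d : ℝ) / 2)) - ((d : ℝ) * Real.pi ^ 2) / (2 * ε) ≤
        Real.log (gker ε x) ∧
      Real.log (gker ε x) ≤
        Real.log ((2 * Real.pi * ε) ^ (-(d : ℝ) / 2)) + (d : ℝ) * Real.log 6 := by
  have hπ := Real.pi_pos
  obtain ⟨hlow, hup⟩ := tsum_gauss_bounds hε hεπ x
  set C : ℝ := (2 * Real.pi * ε) ^ (-(d : ℝ) / 2) with hCdef
  have hC : 0 < C := Real.rpow_pos_of_pos (by positivity) _
  set T : ℝ := ∑' k : Fin d → ℤ,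
      Real.exp (-(∑ i, (lift x i - 2 * Real.pi * (k i)) ^ 2) / (2 * ε)) with hTdef
  have hT0 : 0 < T := lt_of_lt_of_le (Real.exp_pos _) hlow
  have hgk : gker ε x = C * T := rfl
  have hlog : Real.log (gker ε x) = Real.log C + Real.log T := by
    rw [hgk, Real.log_mul hC.ne' hT0.ne']
  constructor
  · rw [hlog]
    have : -(((d : ℝ) * Real.pi ^ 2) / (2 * ε)) ≤ Real.log T := by
      have := Real.log_le_log (Real.exp_pos _) hlow
      rwa [Real.log_exp, neg_div] at this
    linarith
  · rw [hlog]
    have : Real.log T ≤ (d : ℝ) * Real.log 6 := by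
      have := Real.log_le_log hT0 hup
      rwa [Real.log_pow] at this
    linarith

end Torus
end Statement14Aux

/-- oscillation of the cost: for `0 < ε < π²/2`,
`osc(c_ε) < 4π²d`, i.e. `sup c_ε - inf c_ε < 4π²d`; equivalently
`ε·(sup log K_ε - inf log K_ε) < 4π²d`. -/
theorem statement14 (d : ℕ) (hd : 1 ≤ d) (ε : ℝ) (hε0 : 0 < ε) (hε : ε < Real.pi ^ 2 / 2) :
    ((⨆ p : Torus d × Torus d, cost ε p.1 p.2) -
        (⨅ p : Torus d × Torus d, cost ε p.1 p.2) < 4 * Real.pi ^ 2 * d) ∧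
      ε * ((⨆ x : Torus d, Real.log (gker ε x)) - ⨅ x : Torus d, Real.log (gker ε x)) <
        4 * Real.pi ^ 2 * d := by
  have hπ := Real.pi_pos
  have hd1 : (1 : ℝ) ≤ (d : ℝ) := by exact_mod_cast hd
  set C : ℝ := Real.log ((2 * Real.pi * ε) ^ (-(d : ℝ) / 2)) with hCdef
  set U : ℝ := C + (d : ℝ) * Real.log 6 with hUdef
  set L : ℝ := C - ((d : ℝ) * Real.pi ^ 2) / (2 * ε) with hLdef
  have hb : ∀ x : Torus d, L ≤ Real.log (gker ε x) ∧ Real.log (gker ε x) ≤ U :=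
    fun x => log_gker_bounds hε0 hε x
  have hlog6 : Real.log 6 < 7 := by
    rw [Real.log_lt_iff_lt_exp (by norm_num)]
    have h4 := Real.add_one_le_exp (7 : ℝ)
    linarith
  have hlog6pos : (0 : ℝ) < Real.log 6 := Real.log_pos (by norm_num)
  have key : ε * (U - L) < 4 * Real.pi ^ 2 * d := by
    have hUL : U - L = (d : ℝ) * Real.log 6 + ((d : ℝ) * Real.pi ^ 2) / (2 * ε) := by
      rw [hUdef, hLdef]; ring
    have hmul : ε * (((d : ℝ) * Real.pi ^ 2) / (2 * ε)) = (d : ℝ) * Real.pi ^ 2 / 2 := by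
      field_simp
    have h1 : ε * ((d : ℝ) * Real.log 6) < (Real.pi ^ 2 / 2) * ((d : ℝ) * 7) := by
      have hpos : (0 : ℝ) < (d : ℝ) * Real.log 6 := by positivity
      calc ε * ((d : ℝ) * Real.log 6) < (Real.pi ^ 2 / 2) * ((d : ℝ) * Real.log 6) :=
            mul_lt_mul_of_pos_right hε hpos
        _ ≤ (Real.pi ^ 2 / 2) * ((d : ℝ) * 7) := by
            apply mul_le_mul_of_nonneg_left _ (by positivity)
            apply mul_le_mul_of_nonneg_left hlog6.le (by positivity)
    rw [hUL, mul_add, hmul]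
    nlinarith
  have hεU : ∀ x : Torus d, ε * L ≤ ε * Real.log (gker ε x) ∧
      ε * Real.log (gker ε x) ≤ ε * U :=
    fun x => ⟨mul_le_mul_of_nonneg_left (hb x).1 hε0.le,
      mul_le_mul_of_nonneg_left (hb x).2 hε0.le⟩
  constructor
  · have hcsup : (⨆ p : Torus d × Torus d, cost ε p.1 p.2) ≤ -(ε * L) := by
      apply ciSup_le
      intro p
      have := (hεU (p.1 - p.2)).1
      simpa [cost] using neg_le_neg this
    have hcinf : -(ε * U) ≤ ⨅ p : Torus d × Torus d, cost ε p.1 p.2 := by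
      apply le_ciInf
      intro p
      have := (hεU (p.1 - p.2)).2
      simpa [cost] using neg_le_neg this
    have hring : -(ε * L) - (-(ε * U)) = ε * (U - L) := by ring
    linarith
  · have hsup : (⨆ x : Torus d, Real.log (gker ε x)) ≤ U := ciSup_le fun x => (hb x).2
    have hinf : L ≤ ⨅ x : Torus d, Real.log (gker ε x) := le_ciInf fun x => (hb x).1
    have : (⨆ x : Torus d, Real.log (gker ε x)) - (⨅ x : Torus d, Real.log (gker ε x)) ≤
        U - L := by linarith
    calc ε * ((⨆ x : Torus d, Real.log (gker ε x)) - ⨅ x : Torus d, Real.log (gker ε x))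
        ≤ ε * (U - L) := mul_le_mul_of_nonneg_left this hε0.le
      _ < 4 * Real.pi ^ 2 * d := key
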